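/- Let C: b x₁² + a x₂² = x₀² be a Euclidean ellipse or hyperbola with a,b nonzero, a+b ≠ 0, a ≠ b. Then the Frégier conic of C is the image of C under the central scaling with factor (a−b)/(a+b) about the center [1,0,0]. -/

import Mathlib

/-- Points of the real projective plane, given by homogeneous coordinates `[x₀, x₁, x₂]`. -/
abbrev PP := Fin 3 → ℝ

/-- Cross product: line joining two points / point of intersection of two lines. -/
def cross3 (a b : PP) : PP :=
  ![a 1 * b 2 - a 2 * b 1, a 2 * b 0 - a 0 * b 2, a 0 * b 1 - a 1 * b 0]

def dot3 (a b : PP) : ℝ := a 0 * b 0 + a 1 * b 1 + a 2 * b 2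

/-- `q`, `r`, `f` are collinear. -/
def Coll (q r f : PP) : Prop := dot3 (cross3 q r) f = 0

/-- Euclidean perpendicularity of the lines `pq` and `pr`
(standard inner product on directions in the affine chart `x₀ = 1`). -/
def EuclidPerp (p q r : PP) : Prop :=
  (q 1 * p 0 - p 1 * q 0) * (r 1 * p 0 - p 1 * r 0) +
    (q 2 * p 0 - p 2 * q 0) * (r 2 * p 0 - p 2 * r 0) = 0

/-- Hyperbolic perpendicularity of the lines `pq` and `pr`:
conjugacy with respect to the absolute conic `N : x₁² + x₂² = x₀²`
(a line is perpendicular to another iff it contains its pole w.r.t. `N`). -/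
def HypPerp (p q r : PP) : Prop :=
  -(cross3 p q 0 * cross3 p r 0) + cross3 p q 1 * cross3 p r 1 +
    cross3 p q 2 * cross3 p r 2 = 0

/-- Elliptic perpendicularity of the lines `pq` and `pr`:
conjugacy with respect to the absolute polarity `x₀² + x₁² + x₂²`. -/
def EllPerp (p q r : PP) : Prop :=
  dot3 (cross3 p q) (cross3 p r) = 0

/-- `f` lies on every chord `qr` of the conic `C` such that the legs `pq`, `pr`
are perpendicular (a right triangle inscribed in `C` with right angle at `p`). -/
def IsFregier (OnC : PP → Prop) (Perp : PP → PP → PP → Prop) (p f : PP) : Prop :=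
  ∀ q r : PP, OnC q → OnC r → cross3 p q ≠ 0 → cross3 p r ≠ 0 → Perp p q r →
    Coll q r f

/-- `f` is THE Frégier point of the conic `C` at `p`: the common point of the
hypotenuses of all right triangles inscribed in `C` with right angle at `p`
(unique up to scalar). -/
def IsFregierPoint (OnC : PP → Prop) (Perp : PP → PP → PP → Prop) (p f : PP) : Prop :=
  f ≠ 0 ∧ IsFregier OnC Perp p f ∧
    ∀ f' : PP, f' ≠ 0 → IsFregier OnC Perp p f' → ∃ t : ℝ, t ≠ 0 ∧ f' = t • f

/-- The Frégier locus of a conic: all Frégier points as `p` varies on the conic. -/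
def FregierLocus (OnC : PP → Prop) (Perp : PP → PP → PP → Prop) : Set PP :=
  { f | ∃ p : PP, p ≠ 0 ∧ OnC p ∧ IsFregierPoint OnC Perp p f }

/-! ### Auxiliary machinery for the Euclidean Frégier conic -/

/-- The Frégier point of the conic `b x₁² + a x₂² = x₀²` at the point `p`. -/
def gvec (a b : ℝ) (p : PP) : PP := ![(a+b) * p 0, (a-b) * p 1, -((a-b) * p 2)]

lemma pp_zero (v : PP) (h0 : v 0 = 0) (h1 : v 1 = 0) (h2 : v 2 = 0) : v = 0 := by
  funext i; fin_cases i <;> assumption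

lemma uvec_ne (p q : PP) (hp0 : p 0 ≠ 0) (h : cross3 p q ≠ 0) :
    ¬(q 1 * p 0 - p 1 * q 0 = 0 ∧ q 2 * p 0 - p 2 * q 0 = 0) := by
  rintro ⟨h1, h2⟩
  apply h
  apply pp_zero
  · show p 1 * q 2 - p 2 * q 1 = 0
    have key : p 0 * (p 1 * q 2 - p 2 * q 1) = 0 := by linear_combination p 1 * h2 - p 2 * h1
    rcases mul_eq_zero.mp key with h | h
    · exact absurd h hp0
    · exact h
  · show p 2 * q 0 - p 0 * q 2 = 0
    linear_combination -h2
  · show p 0 * q 1 - p 1 * q 0 = 0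
    linear_combination h1

/-- coordinates of a point at infinity of the conic are nonzero -/
lemma inf_coords (a b : ℝ) (ha : a ≠ 0) (hb : b ≠ 0) (p : PP)
    (hpC : b * p 1 ^ 2 + a * p 2 ^ 2 = p 0 ^ 2) (hpne : p ≠ 0) (hp0 : p 0 = 0) :
    p 1 ≠ 0 ∧ p 2 ≠ 0 := by
  constructor
  · intro h1
    have h2 : p 2 = 0 := by
      have : a * p 2 ^ 2 = 0 := by linear_combination hpC - b * p 1 * h1 + p 0 * hp0
      rcases mul_eq_zero.mp this with h | h
      · exact absurd h ha
      · exact (pow_eq_zero_iff two_ne_zero).mp h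
    exact hpne (pp_zero p hp0 h1 h2)
  · intro h2
    have h1 : p 1 = 0 := by
      have : b * p 1 ^ 2 = 0 := by linear_combination hpC - a * p 2 * h2 + p 0 * hp0
      rcases mul_eq_zero.mp this with h | h
      · exact absurd h hb
      · exact (pow_eq_zero_iff two_ne_zero).mp h
    exact hpne (pp_zero p hp0 h1 h2)

/-- Existence: `gvec a b p` lies on every right chord at `p`. -/
lemma isFregier_gvec (a b : ℝ) (ha : a ≠ 0) (hb : b ≠ 0) (p : PP)
    (hpC : b * p 1 ^ 2 + a * p 2 ^ 2 = p 0 ^ 2) (hpne : p ≠ 0) :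
    IsFregier (fun v => b * v 1 ^ 2 + a * v 2 ^ 2 = v 0 ^ 2) EuclidPerp p (gvec a b p) := by
  intro q r hq hr hpq hpr hperp
  unfold EuclidPerp at hperp
  unfold Coll
  by_cases hp0 : p 0 = 0
  · -- p at infinity
    obtain ⟨hp1, hp2⟩ := inf_coords a b ha hb p hpC hpne hp0
    have A1 : b * p 1 ^ 2 + a * p 2 ^ 2 = 0 := by rw [hp0] at hpC; linear_combination hpC
    have hqr : q 0 * r 0 = 0 := by
      have h : q 0 * r 0 * (p 1 ^ 2 + p 2 ^ 2) = 0 := by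
        rw [hp0] at hperp; linear_combination hperp
      rcases mul_eq_zero.mp h with h | h
      · exact h
      · exfalso; have : p 1 ^ 2 + p 2 ^ 2 > 0 := by positivity
        linarith
    rcases mul_eq_zero.mp hqr with hq0 | hr0
    · have hcr : p 1 * q 2 - p 2 * q 1 ≠ 0 := by
        intro h
        apply hpq
        apply pp_zero
        · show p 1 * q 2 - p 2 * q 1 = 0; exact h
        · show p 2 * q 0 - p 0 * q 2 = 0; rw [hp0, hq0]; ring
        · show p 0 * q 1 - p 1 * q 0 = 0; rw [hp0, hq0]; ring
      have A2 : b * q 1 ^ 2 + a * q 2 ^ 2 = 0 := by rw [hq0] at hq; linear_combination hq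
      have key2 : b * ((p 1 * q 2 - p 2 * q 1) * (q 1 * p 2 + q 2 * p 1)) = 0 := by
        linear_combination q 2 ^ 2 * A1 - p 2 ^ 2 * A2
      have hsum : q 1 * p 2 + q 2 * p 1 = 0 := by
        rcases mul_eq_zero.mp key2 with h | h
        · exact absurd h hb
        · rcases mul_eq_zero.mp h with h | h
          · exact absurd h hcr
          · exact h
      show dot3 (cross3 q r) (gvec a b p) = 0
      unfold dot3 cross3 gvec
      simp only [Matrix.cons_val_zero, Matrix.cons_val_one, Matrix.head_cons,
        Matrix.cons_val_two, Matrix.tail_cons]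
      rw [hp0, hq0]
      linear_combination (a - b) * r 0 * hsum
    · have hcr : p 1 * r 2 - p 2 * r 1 ≠ 0 := by
        intro h
        apply hpr
        apply pp_zero
        · show p 1 * r 2 - p 2 * r 1 = 0; exact h
        · show p 2 * r 0 - p 0 * r 2 = 0; rw [hp0, hr0]; ring
        · show p 0 * r 1 - p 1 * r 0 = 0; rw [hp0, hr0]; ring
      have A2 : b * r 1 ^ 2 + a * r 2 ^ 2 = 0 := by rw [hr0] at hr; linear_combination hr
      have key2 : b * ((p 1 * r 2 - p 2 * r 1) * (r 1 * p 2 + r 2 * p 1)) = 0 := by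
        linear_combination r 2 ^ 2 * A1 - p 2 ^ 2 * A2
      have hsum : r 1 * p 2 + r 2 * p 1 = 0 := by
        rcases mul_eq_zero.mp key2 with h | h
        · exact absurd h hb
        · rcases mul_eq_zero.mp h with h | h
          · exact absurd h hcr
          · exact h
      show dot3 (cross3 q r) (gvec a b p) = 0
      unfold dot3 cross3 gvec
      simp only [Matrix.cons_val_zero, Matrix.cons_val_one, Matrix.head_cons,
        Matrix.cons_val_two, Matrix.tail_cons]
      rw [hp0, hr0]
      linear_combination (-(a - b)) * q 0 * hsum
  · -- affine case
    have hu := uvec_ne p q hp0 hpq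
    have hv := uvec_ne p r hp0 hpr
    obtain ⟨t, hv1, hv2⟩ : ∃ t : ℝ,
        r 1 * p 0 - p 1 * r 0 = -(t * (q 2 * p 0 - p 2 * q 0)) ∧
        r 2 * p 0 - p 2 * r 0 = t * (q 1 * p 0 - p 1 * q 0) := by
      by_cases hu1 : q 1 * p 0 - p 1 * q 0 = 0
      · have hu2 : q 2 * p 0 - p 2 * q 0 ≠ 0 := fun h => hu ⟨hu1, h⟩
        refine ⟨-(r 1 * p 0 - p 1 * r 0) / (q 2 * p 0 - p 2 * q 0), by rw [neg_div, neg_mul, neg_neg, div_mul_cancel₀ _ hu2], ?_⟩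
        have h : (q 2 * p 0 - p 2 * q 0) * (r 2 * p 0 - p 2 * r 0) = 0 := by
          linear_combination hperp - (r 1 * p 0 - p 1 * r 0) * hu1
        rw [hu1]
        rcases mul_eq_zero.mp h with h | h
        · exact absurd h hu2
        · rw [h]; ring
      · refine ⟨(r 2 * p 0 - p 2 * r 0) / (q 1 * p 0 - p 1 * q 0), ?_, by rw [div_mul_cancel₀ _ hu1]⟩
        apply mul_left_cancel₀ hu1
        have h1 : (q 1 * p 0 - p 1 * q 0) * (r 1 * p 0 - p 1 * r 0) =
            -((q 2 * p 0 - p 2 * q 0) * (r 2 * p 0 - p 2 * r 0)) := by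
          linear_combination hperp
        rw [h1]
        rw [mul_neg, div_mul_eq_mul_div, mul_div_assoc', mul_div_cancel_left₀ _ hu1]
        ring
    have ht : t ≠ 0 := by
      intro h0
      rw [h0] at hv1 hv2
      exact hv ⟨by linarith [hv1], by linarith [hv2]⟩
    have E1 : 2 * q 0 * (b * p 1 * (q 1 * p 0 - p 1 * q 0) + a * p 2 * (q 2 * p 0 - p 2 * q 0))
        + (b * (q 1 * p 0 - p 1 * q 0) ^ 2 + a * (q 2 * p 0 - p 2 * q 0) ^ 2) = 0 := by
      linear_combination p 0 ^ 2 * hq - q 0 ^ 2 * hpC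
    have E2 : 2 * r 0 * t * (a * p 2 * (q 1 * p 0 - p 1 * q 0) - b * p 1 * (q 2 * p 0 - p 2 * q 0))
        + t ^ 2 * (a * (q 1 * p 0 - p 1 * q 0) ^ 2 + b * (q 2 * p 0 - p 2 * q 0) ^ 2) = 0 := by
      linear_combination p 0 ^ 2 * hr - r 0 ^ 2 * hpC
        - b * (r 1 * p 0 + (p 1 * r 0 - t * (q 2 * p 0 - p 2 * q 0))) * hv1
        - a * (r 2 * p 0 + (p 2 * r 0 + t * (q 1 * p 0 - p 1 * q 0))) * hv2
    have key : t * (p 0 * dot3 (cross3 q r) (gvec a b p)) = 0 := by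
      unfold dot3 cross3 gvec
      simp only [Matrix.cons_val_zero, Matrix.cons_val_one, Matrix.head_cons,
        Matrix.cons_val_two, Matrix.tail_cons]
      linear_combination t ^ 2 * E1 + E2
        + (t * (-(q 2 * ((a + b) * p 0)) + q 0 * (-((a - b) * p 2)))) * hv1
        + (t * (q 1 * ((a + b) * p 0) - q 0 * ((a - b) * p 1))) * hv2
    rcases mul_eq_zero.mp key with h | h
    · exact absurd h ht
    rcases mul_eq_zero.mp h with h | h
    · exact absurd h hp0
    exact h

/-- second intersection of the line through `p` in direction `(c, s)` with the conic. -/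
def Qv (a b c s : ℝ) (p : PP) : PP :=
  ![(b*c^2 + a*s^2) * p 0,
    (b*c^2 + a*s^2) * p 1 - 2*(b * p 1 * c + a * p 2 * s)*c,
    (b*c^2 + a*s^2) * p 2 - 2*(b * p 1 * c + a * p 2 * s)*s]

lemma onC_Qv (a b c s : ℝ) (p : PP) (hpC : b * p 1 ^ 2 + a * p 2 ^ 2 = p 0 ^ 2) :
    b * (Qv a b c s p) 1 ^ 2 + a * (Qv a b c s p) 2 ^ 2 = (Qv a b c s p) 0 ^ 2 := by
  show b * ((b*c^2 + a*s^2) * p 1 - 2*(b * p 1 * c + a * p 2 * s)*c) ^ 2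
      + a * ((b*c^2 + a*s^2) * p 2 - 2*(b * p 1 * c + a * p 2 * s)*s) ^ 2
      = ((b*c^2 + a*s^2) * p 0) ^ 2
  linear_combination (b*c^2 + a*s^2)^2 * hpC

lemma perp_Qv (a b c s : ℝ) (p : PP) :
    EuclidPerp p (Qv a b c s p) (Qv a b (-s) c p) := by
  unfold EuclidPerp Qv
  simp only [Matrix.cons_val_zero, Matrix.cons_val_one, Matrix.head_cons,
    Matrix.cons_val_two, Matrix.tail_cons]
  ring

lemma cross_Qv_ne (a b c s : ℝ) (p : PP) (hp0 : p 0 ≠ 0)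
    (hm : b * p 1 * c + a * p 2 * s ≠ 0) (hcs : ¬(c = 0 ∧ s = 0)) :
    cross3 p (Qv a b c s p) ≠ 0 := by
  intro h
  have h1 : p 2 * ((b*c^2 + a*s^2) * p 0) - p 0 * ((b*c^2 + a*s^2) * p 2 - 2*(b * p 1 * c + a * p 2 * s)*s) = 0 :=
    congrFun h 1
  have h2 : p 0 * ((b*c^2 + a*s^2) * p 1 - 2*(b * p 1 * c + a * p 2 * s)*c) - p 1 * ((b*c^2 + a*s^2) * p 0) = 0 :=
    congrFun h 2
  have hs : s = 0 := by
    have : 2 * (b * p 1 * c + a * p 2 * s) * s * p 0 = 0 := by linear_combination h1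
    rcases mul_eq_zero.mp this with h' | h'
    · rcases mul_eq_zero.mp h' with h'' | h''
      · rcases mul_eq_zero.mp h'' with h3 | h3
        · norm_num at h3
        · exact absurd h3 hm
      · exact h''
    · exact absurd h' hp0
  have hc : c = 0 := by
    have : 2 * (b * p 1 * c + a * p 2 * s) * c * p 0 = 0 := by linear_combination -h2
    rcases mul_eq_zero.mp this with h' | h'
    · rcases mul_eq_zero.mp h' with h'' | h''
      · rcases mul_eq_zero.mp h'' with h3 | h3
        · norm_num at h3
        · exact absurd h3 hm
      · exact h''
    · exact absurd h' hp0
  exact hcs ⟨hc, hs⟩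

lemma cross3_smul_right (u v : PP) (t : ℝ) : cross3 u (t • v) = t • cross3 u v := by
  funext i; fin_cases i
  · show u 1 * (t * v 2) - u 2 * (t * v 1) = t * (u 1 * v 2 - u 2 * v 1); ring
  · show u 2 * (t * v 0) - u 0 * (t * v 2) = t * (u 2 * v 0 - u 0 * v 2); ring
  · show u 0 * (t * v 1) - u 1 * (t * v 0) = t * (u 0 * v 1 - u 1 * v 0); ring

lemma triple_prod (L1 L2 f : PP) (h1 : dot3 L1 f = 0) (h2 : dot3 L2 f = 0) :
    cross3 f (cross3 L1 L2) = 0 := by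
  funext i
  fin_cases i
  · show f 1 * cross3 L1 L2 2 - f 2 * cross3 L1 L2 1 = 0
    unfold cross3 dot3 at *
    simp only [Matrix.cons_val_zero, Matrix.cons_val_one, Matrix.head_cons,
      Matrix.cons_val_two, Matrix.tail_cons]
    linear_combination L1 0 * h2 - L2 0 * h1
  · show f 2 * cross3 L1 L2 0 - f 0 * cross3 L1 L2 2 = 0
    unfold cross3 dot3 at *
    simp only [Matrix.cons_val_zero, Matrix.cons_val_one, Matrix.head_cons,
      Matrix.cons_val_two, Matrix.tail_cons]
    linear_combination L1 1 * h2 - L2 1 * h1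
  · show f 0 * cross3 L1 L2 1 - f 1 * cross3 L1 L2 0 = 0
    unfold cross3 dot3 at *
    simp only [Matrix.cons_val_zero, Matrix.cons_val_one, Matrix.head_cons,
      Matrix.cons_val_two, Matrix.tail_cons]
    linear_combination L1 2 * h2 - L2 2 * h1

lemma eq_smul_of_cross_zero (f w : PP) (h : cross3 f w = 0) (hw : w ≠ 0) :
    ∃ τ : ℝ, f = τ • w := by
  have h0 : f 1 * w 2 - f 2 * w 1 = 0 := congrFun h 0
  have h1 : f 2 * w 0 - f 0 * w 2 = 0 := congrFun h 1
  have h2 : f 0 * w 1 - f 1 * w 0 = 0 := congrFun h 2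
  have hcomp : ¬(w 0 = 0 ∧ w 1 = 0 ∧ w 2 = 0) := by
    rintro ⟨a0, a1, a2⟩; exact hw (pp_zero w a0 a1 a2)
  by_cases hw0 : w 0 = 0
  · by_cases hw1 : w 1 = 0
    · have hw2 : w 2 ≠ 0 := fun hh => hcomp ⟨hw0, hw1, hh⟩
      refine ⟨f 2 / w 2, ?_⟩
      funext i; fin_cases i
      · show f 0 = f 2 / w 2 * w 0
        rw [hw0]; field_simp
        have : f 0 * w 2 = 0 := by linear_combination -h1 + f 2 * hw0
        rcases mul_eq_zero.mp this with h' | h'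
        · rw [h']; ring
        · exact absurd h' hw2
      · show f 1 = f 2 / w 2 * w 1
        rw [hw1]; field_simp
        have : f 1 * w 2 = 0 := by linear_combination h0 + f 2 * hw1
        rcases mul_eq_zero.mp this with h' | h'
        · rw [h']; ring
        · exact absurd h' hw2
      · show f 2 = f 2 / w 2 * w 2
        field_simp
    · refine ⟨f 1 / w 1, ?_⟩
      funext i; fin_cases i
      · show f 0 = f 1 / w 1 * w 0
        rw [hw0]
        have : f 0 * w 1 = 0 := by linear_combination h2 + f 1 * hw0
        rcases mul_eq_zero.mp this with h' | h'
        · rw [h']; ring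
        · exact absurd h' hw1
      · show f 1 = f 1 / w 1 * w 1
        field_simp
      · show f 2 = f 1 / w 1 * w 2
        field_simp
        linear_combination -h0
  · refine ⟨f 0 / w 0, ?_⟩
    funext i; fin_cases i
    · show f 0 = f 0 / w 0 * w 0
      field_simp
    · show f 1 = f 0 / w 0 * w 1
      field_simp
      linear_combination -h2
    · show f 2 = f 0 / w 0 * w 2
      field_simp
      linear_combination h1

lemma chordH0 (a b c s d e : ℝ) (p : PP) (hpC : b * p 1 ^ 2 + a * p 2 ^ 2 = p 0 ^ 2) :
    cross3 (cross3 (Qv a b c s p) (Qv a b (-s) c p)) (cross3 (Qv a b d e p) (Qv a b (-e) d p)) 0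
      = (4*(c*e - s*d)*(c*d + s*e)*(c^2+s^2)*(d^2+e^2)*(a*b*p 0^3)) * ((a+b) * p 0) := by
  unfold cross3 Qv
  simp only [Matrix.cons_val_zero, Matrix.cons_val_one, Matrix.head_cons,
    Matrix.cons_val_two, Matrix.tail_cons]
  linear_combination (4*a*b*(a+b)*p 0^2*((c^2+s^2)*(d^2+e^2)*(c*e-s*d)*(c*d+s*e))) * hpC

lemma chordH1 (a b c s d e : ℝ) (p : PP) (hpC : b * p 1 ^ 2 + a * p 2 ^ 2 = p 0 ^ 2) :
    cross3 (cross3 (Qv a b c s p) (Qv a b (-s) c p)) (cross3 (Qv a b d e p) (Qv a b (-e) d p)) 1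
      = (4*(c*e - s*d)*(c*d + s*e)*(c^2+s^2)*(d^2+e^2)*(a*b*p 0^3)) * ((a-b) * p 1) := by
  unfold cross3 Qv
  simp only [Matrix.cons_val_zero, Matrix.cons_val_one, Matrix.head_cons,
    Matrix.cons_val_two, Matrix.tail_cons]
  linear_combination (4*a*b*(a-b)*p 0*p 1*((c^2+s^2)*(d^2+e^2)*(c*e-s*d)*(c*d+s*e))) * hpC

lemma chordH2 (a b c s d e : ℝ) (p : PP) (hpC : b * p 1 ^ 2 + a * p 2 ^ 2 = p 0 ^ 2) :
    cross3 (cross3 (Qv a b c s p) (Qv a b (-s) c p)) (cross3 (Qv a b d e p) (Qv a b (-e) d p)) 2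
      = (4*(c*e - s*d)*(c*d + s*e)*(c^2+s^2)*(d^2+e^2)*(a*b*p 0^3)) * (-((a-b) * p 2)) := by
  unfold cross3 Qv
  simp only [Matrix.cons_val_zero, Matrix.cons_val_one, Matrix.head_cons,
    Matrix.cons_val_two, Matrix.tail_cons]
  linear_combination (-(4*a*b*(a-b)*p 0*p 2*((c^2+s^2)*(d^2+e^2)*(c*e-s*d)*(c*d+s*e)))) * hpC

/-- Uniqueness: any common point of the right chords at `p` is a multiple of `gvec a b p`. -/
lemma fregier_unique (a b : ℝ) (ha : a ≠ 0) (hb : b ≠ 0) (hab : a + b ≠ 0) (hne : a ≠ b)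
    (p : PP) (hpC : b * p 1 ^ 2 + a * p 2 ^ 2 = p 0 ^ 2) (hpne : p ≠ 0) (f' : PP)
    (hf'ne : f' ≠ 0)
    (hIsF : IsFregier (fun v => b * v 1 ^ 2 + a * v 2 ^ 2 = v 0 ^ 2) EuclidPerp p f') :
    ∃ τ : ℝ, τ ≠ 0 ∧ f' = τ • gvec a b p := by
  by_cases hp0 : p 0 = 0
  · -- p at infinity
    obtain ⟨hp1, hp2⟩ := inf_coords a b ha hb p hpC hpne hp0
    have A1 : b * p 1 ^ 2 + a * p 2 ^ 2 = 0 := by rw [hp0] at hpC; linear_combination hpC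
    set qs : PP := ![(0:ℝ), p 1, -(p 2)] with hqs
    set r1 : PP := ![2*(b*p 1^2), p 1*(1+b*p 1^2), p 2*(1-b*p 1^2)] with hr1
    set r2 : PP := ![-(2*(b*p 1^2)), p 1*(1+b*p 1^2), p 2*(1-b*p 1^2)] with hr2
    have honqs : b * qs 1 ^ 2 + a * qs 2 ^ 2 = qs 0 ^ 2 := by
      show b * p 1 ^ 2 + a * (-(p 2)) ^ 2 = (0:ℝ) ^ 2
      linear_combination A1
    have honr1 : b * r1 1 ^ 2 + a * r1 2 ^ 2 = r1 0 ^ 2 := by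
      show b * (p 1*(1+b*p 1^2)) ^ 2 + a * (p 2*(1-b*p 1^2)) ^ 2 = (2*(b*p 1^2)) ^ 2
      linear_combination (1 - b*p 1^2)^2 * A1
    have honr2 : b * r2 1 ^ 2 + a * r2 2 ^ 2 = r2 0 ^ 2 := by
      show b * (p 1*(1+b*p 1^2)) ^ 2 + a * (p 2*(1-b*p 1^2)) ^ 2 = (-(2*(b*p 1^2))) ^ 2
      linear_combination (1 - b*p 1^2)^2 * A1
    have hcqs : cross3 p qs ≠ 0 := by
      intro h
      have h0 : p 1 * (-(p 2)) - p 2 * p 1 = 0 := congrFun h 0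
      have : p 1 * p 2 = 0 := by linear_combination -h0/2
      rcases mul_eq_zero.mp this with h' | h'
      · exact hp1 h'
      · exact hp2 h'
    have hB : b * p 1 ^ 2 ≠ 0 := by
      intro h
      rcases mul_eq_zero.mp h with h' | h'
      · exact hb h'
      · exact hp1 ((pow_eq_zero_iff two_ne_zero).mp h')
    have hcr1 : cross3 p r1 ≠ 0 := by
      intro h
      have h1 : p 2 * (2*(b*p 1^2)) - p 0 * (p 2*(1-b*p 1^2)) = 0 := congrFun h 1
      rw [hp0] at h1
      have : p 2 * (2*(b*p 1^2)) = 0 := by linear_combination h1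
      rcases mul_eq_zero.mp this with h' | h'
      · exact hp2 h'
      · have : b * p 1 ^2 = 0 := by linear_combination h'/2
        exact hB this
    have hcr2 : cross3 p r2 ≠ 0 := by
      intro h
      have h1 : p 2 * (-(2*(b*p 1^2))) - p 0 * (p 2*(1-b*p 1^2)) = 0 := congrFun h 1
      rw [hp0] at h1
      have : p 2 * (2*(b*p 1^2)) = 0 := by linear_combination -h1
      rcases mul_eq_zero.mp this with h' | h'
      · exact hp2 h'
      · have : b * p 1 ^2 = 0 := by linear_combination h'/2
        exact hB this
    have hperp1 : EuclidPerp p qs r1 := by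
      unfold EuclidPerp
      show (qs 1 * p 0 - p 1 * qs 0) * (r1 1 * p 0 - p 1 * r1 0) +
        (qs 2 * p 0 - p 2 * qs 0) * (r1 2 * p 0 - p 2 * r1 0) = 0
      rw [hp0]
      show (p 1 * 0 - p 1 * 0) * _ + (-(p 2) * 0 - p 2 * 0) * _ = 0
      ring
    have hperp2 : EuclidPerp p qs r2 := by
      unfold EuclidPerp
      show (qs 1 * p 0 - p 1 * qs 0) * (r2 1 * p 0 - p 1 * r2 0) +
        (qs 2 * p 0 - p 2 * qs 0) * (r2 2 * p 0 - p 2 * r2 0) = 0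
      rw [hp0]
      show (p 1 * 0 - p 1 * 0) * _ + (-(p 2) * 0 - p 2 * 0) * _ = 0
      ring
    have hL1 : dot3 (cross3 qs r1) f' = 0 := hIsF qs r1 honqs honr1 hcqs hcr1 hperp1
    have hL2 : dot3 (cross3 qs r2) f' = 0 := hIsF qs r2 honqs honr2 hcqs hcr2 hperp2
    have htr := triple_prod (cross3 qs r1) (cross3 qs r2) f' hL1 hL2
    have hH0 : cross3 (cross3 qs r1) (cross3 qs r2) 0 = (-(8*(b*p 1^2)*p 1*p 2)) * qs 0 := by
      unfold cross3
      rw [hqs, hr1, hr2]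
      simp only [Matrix.cons_val_zero, Matrix.cons_val_one, Matrix.head_cons,
        Matrix.cons_val_two, Matrix.tail_cons]
      ring
    have hH1 : cross3 (cross3 qs r1) (cross3 qs r2) 1 = (-(8*(b*p 1^2)*p 1*p 2)) * qs 1 := by
      unfold cross3
      rw [hqs, hr1, hr2]
      simp only [Matrix.cons_val_zero, Matrix.cons_val_one, Matrix.head_cons,
        Matrix.cons_val_two, Matrix.tail_cons]
      ring
    have hH2 : cross3 (cross3 qs r1) (cross3 qs r2) 2 = (-(8*(b*p 1^2)*p 1*p 2)) * qs 2 := by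
      unfold cross3
      rw [hqs, hr1, hr2]
      simp only [Matrix.cons_val_zero, Matrix.cons_val_one, Matrix.head_cons,
        Matrix.cons_val_two, Matrix.tail_cons]
      ring
    have hHvec : cross3 (cross3 qs r1) (cross3 qs r2) = (-(8*(b*p 1^2)*p 1*p 2)) • qs := by
      funext i; fin_cases i
      · exact hH0
      · exact hH1
      · exact hH2
    rw [hHvec, cross3_smul_right] at htr
    have hμ : -(8*(b*p 1^2)*p 1*p 2) ≠ 0 := by
      have h8 : (8:ℝ) ≠ 0 := by norm_num
      exact neg_ne_zero.mpr (mul_ne_zero (mul_ne_zero (mul_ne_zero h8 hB) hp1) hp2)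
    have hcz : cross3 f' qs = 0 := by
      rcases smul_eq_zero.mp htr with h | h
      · exact absurd h hμ
      · exact h
    have hqsne : qs ≠ 0 := by
      intro h
      have := congrFun h 1
      exact hp1 this
    obtain ⟨τ, hτ⟩ := eq_smul_of_cross_zero f' qs hcz hqsne
    have hτne : τ ≠ 0 := by
      intro h
      rw [h, zero_smul] at hτ
      exact hf'ne hτ
    have hgq : gvec a b p = (a - b) • qs := by
      funext i; fin_cases i
      · show (a+b) * p 0 = (a-b) * 0
        rw [hp0]; ring
      · show (a-b) * p 1 = (a-b) * p 1
        rfl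
      · show -((a-b) * p 2) = (a-b) * (-(p 2))
        ring
    refine ⟨τ / (a - b), ?_, ?_⟩
    · apply div_ne_zero hτne (sub_ne_zero.mpr hne)
    · rw [hgq, smul_smul, div_mul_cancel₀ τ (sub_ne_zero.mpr hne)]
      exact hτ
  · -- affine case
    have hS : (b * p 1)^2 + (a * p 2)^2 ≠ 0 := by
      intro h
      have h1 : b * p 1 = 0 := by nlinarith [sq_nonneg (b * p 1), sq_nonneg (a * p 2)]
      have h2 : a * p 2 = 0 := by nlinarith [sq_nonneg (b * p 1), sq_nonneg (a * p 2)]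
      have hp1 : p 1 = 0 := by
        rcases mul_eq_zero.mp h1 with h' | h'
        · exact absurd h' hb
        · exact h'
      have hp2 : p 2 = 0 := by
        rcases mul_eq_zero.mp h2 with h' | h'
        · exact absurd h' ha
        · exact h'
      apply hp0
      have : p 0 ^ 2 = 0 := by linear_combination -hpC + (b * p 1) * hp1 + (a * p 2) * hp2
      exact (pow_eq_zero_iff two_ne_zero).mp this
    set c : ℝ := b * p 1 - a * p 2 with hc
    set s : ℝ := b * p 1 + a * p 2 with hs
    set d : ℝ := 2*(b * p 1) - a * p 2 with hd
    set e : ℝ := b * p 1 + 2*(a * p 2) with he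
    have hcs : ¬(c = 0 ∧ s = 0) := by
      rintro ⟨h1, h2⟩
      apply hS
      have hA : b * p 1 = 0 := by rw [hc] at h1; rw [hs] at h2; linarith
      have hB2 : a * p 2 = 0 := by rw [hc] at h1; rw [hs] at h2; linarith
      rw [hA, hB2]; ring
    have hde : ¬(d = 0 ∧ e = 0) := by
      rintro ⟨h1, h2⟩
      apply hS
      have hA : b * p 1 = 0 := by rw [hd] at h1; rw [he] at h2; linarith
      have hB2 : a * p 2 = 0 := by rw [hd] at h1; rw [he] at h2; linarith
      rw [hA, hB2]; ring
    have hsc : ¬(-s = 0 ∧ c = 0) := by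
      rintro ⟨h1, h2⟩
      exact hcs ⟨h2, by linarith⟩
    have hed : ¬(-e = 0 ∧ d = 0) := by
      rintro ⟨h1, h2⟩
      exact hde ⟨h2, by linarith⟩
    have hm1 : b * p 1 * c + a * p 2 * s ≠ 0 := by
      have : b * p 1 * c + a * p 2 * s = (b * p 1)^2 + (a * p 2)^2 := by rw [hc, hs]; ring
      rw [this]; exact hS
    have hm2 : b * p 1 * (-s) + a * p 2 * c ≠ 0 := by
      have : b * p 1 * (-s) + a * p 2 * c = -((b * p 1)^2 + (a * p 2)^2) := by rw [hc, hs]; ring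
      rw [this]; exact neg_ne_zero.mpr hS
    have hm3 : b * p 1 * d + a * p 2 * e ≠ 0 := by
      have : b * p 1 * d + a * p 2 * e = 2*((b * p 1)^2 + (a * p 2)^2) := by rw [hd, he]; ring
      rw [this]; exact mul_ne_zero two_ne_zero hS
    have hm4 : b * p 1 * (-e) + a * p 2 * d ≠ 0 := by
      have : b * p 1 * (-e) + a * p 2 * d = -((b * p 1)^2 + (a * p 2)^2) := by rw [hd, he]; ring
      rw [this]; exact neg_ne_zero.mpr hS
    have hL1 : dot3 (cross3 (Qv a b c s p) (Qv a b (-s) c p)) f' = 0 :=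
      hIsF (Qv a b c s p) (Qv a b (-s) c p) (onC_Qv a b c s p hpC) (onC_Qv a b (-s) c p hpC)
        (cross_Qv_ne a b c s p hp0 hm1 hcs) (cross_Qv_ne a b (-s) c p hp0 hm2 hsc)
        (perp_Qv a b c s p)
    have hL2 : dot3 (cross3 (Qv a b d e p) (Qv a b (-e) d p)) f' = 0 :=
      hIsF (Qv a b d e p) (Qv a b (-e) d p) (onC_Qv a b d e p hpC) (onC_Qv a b (-e) d p hpC)
        (cross_Qv_ne a b d e p hp0 hm3 hde) (cross_Qv_ne a b (-e) d p hp0 hm4 hed)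
        (perp_Qv a b d e p)
    have htr := triple_prod _ _ f' hL1 hL2
    have hHvec : cross3 (cross3 (Qv a b c s p) (Qv a b (-s) c p))
        (cross3 (Qv a b d e p) (Qv a b (-e) d p))
        = (4*(c*e - s*d)*(c*d + s*e)*(c^2+s^2)*(d^2+e^2)*(a*b*p 0^3)) • gvec a b p := by
      funext i; fin_cases i
      · exact chordH0 a b c s d e p hpC
      · exact chordH1 a b c s d e p hpC
      · exact chordH2 a b c s d e p hpC
    rw [hHvec, cross3_smul_right] at htr
    have hκ : (4*(c*e - s*d)*(c*d + s*e)*(c^2+s^2)*(d^2+e^2)*(a*b*p 0^3)) ≠ 0 := by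
      have hκeq : 4*(c*e - s*d)*(c*d + s*e)*(c^2+s^2)*(d^2+e^2)*(a*b*p 0^3)
          = -120 * ((b * p 1)^2 + (a * p 2)^2)^4 * (a*b*p 0^3) := by
        rw [hc, hs, hd, he]; ring
      rw [hκeq]
      apply mul_ne_zero
      · apply mul_ne_zero (by norm_num) (pow_ne_zero 4 hS)
      · exact mul_ne_zero (mul_ne_zero ha hb) (pow_ne_zero 3 hp0)
    have hcz : cross3 f' (gvec a b p) = 0 := by
      rcases smul_eq_zero.mp htr with h | h
      · exact absurd h hκ
      · exact h
    have hgne : gvec a b p ≠ 0 := by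
      intro h
      have h0 : (a+b) * p 0 = 0 := congrFun h 0
      rcases mul_eq_zero.mp h0 with h' | h'
      · exact hab h'
      · exact hp0 h'
    obtain ⟨τ, hτ⟩ := eq_smul_of_cross_zero f' (gvec a b p) hcz hgne
    refine ⟨τ, ?_, hτ⟩
    intro h
    rw [h, zero_smul] at hτ
    exact hf'ne hτ

lemma gvec_ne_zero (a b : ℝ) (ha : a ≠ 0) (hb : b ≠ 0) (hab : a + b ≠ 0) (hne : a ≠ b)
    (p : PP) (hpC : b * p 1 ^ 2 + a * p 2 ^ 2 = p 0 ^ 2) (hpne : p ≠ 0) :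
    gvec a b p ≠ 0 := by
  intro h
  have h0 : (a+b) * p 0 = 0 := congrFun h 0
  have h1 : (a-b) * p 1 = 0 := congrFun h 1
  have hp0 : p 0 = 0 := (mul_eq_zero.mp h0).resolve_left hab
  obtain ⟨hp1, _⟩ := inf_coords a b ha hb p hpC hpne hp0
  rcases mul_eq_zero.mp h1 with h' | h'
  · exact (sub_ne_zero.mpr hne) h'
  · exact hp1 h'

lemma coll_smul (q r f : PP) (c : ℝ) (h : Coll q r f) : Coll q r (c • f) := by
  unfold Coll dot3 at *
  simp only [Pi.smul_apply, smul_eq_mul]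
  linear_combination c * h

/-- For the central conic `C : b x₁² + a x₂² = x₀²` (`a, b ≠ 0`,
`a + b ≠ 0`, `a ≠ b`), the Frégier conic of `C` is the image of `C` under the
central scaling with factor `(a−b)/(a+b)` about the center `[1,0,0]`. -/
theorem fregier_conic_is_scaled_conic_euclidean
    (a b : ℝ) (ha : a ≠ 0) (hb : b ≠ 0) (hab : a + b ≠ 0) (hne : a ≠ b) :
    FregierLocus (fun v => b * v 1 ^ 2 + a * v 2 ^ 2 = v 0 ^ 2) EuclidPerp
      = { f : PP | ∃ p : PP, ∃ t : ℝ, p ≠ 0 ∧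
            b * p 1 ^ 2 + a * p 2 ^ 2 = p 0 ^ 2 ∧ t ≠ 0 ∧
            f = t • ![p 0, (a - b) / (a + b) * p 1, (a - b) / (a + b) * p 2] } := by
  ext f
  constructor
  · rintro ⟨p, hpne, hpC, hfne, hfIsF, huniq⟩
    have hgne : gvec a b p ≠ 0 := gvec_ne_zero a b ha hb hab hne p hpC hpne
    obtain ⟨t, ht, hgv⟩ := huniq (gvec a b p) hgne (isFregier_gvec a b ha hb p hpC hpne)
    have hf : f = t⁻¹ • gvec a b p := by
      rw [hgv, smul_smul, inv_mul_cancel₀ ht, one_smul]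
    refine ⟨![p 0, p 1, -(p 2)], t⁻¹ * (a+b), ?_, ?_, ?_, ?_⟩
    · intro h
      apply hpne
      have h0 : p 0 = 0 := congrFun h 0
      have h1 : p 1 = 0 := congrFun h 1
      have h2 : -(p 2) = 0 := congrFun h 2
      exact pp_zero p h0 h1 (neg_eq_zero.mp h2)
    · show b * p 1 ^ 2 + a * (-(p 2)) ^ 2 = p 0 ^ 2
      linear_combination hpC
    · exact mul_ne_zero (inv_ne_zero ht) hab
    · rw [hf]
      funext i; fin_cases i
      · show t⁻¹ * ((a+b) * p 0) = t⁻¹ * (a+b) * p 0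
        ring
      · show t⁻¹ * ((a-b) * p 1) = t⁻¹ * (a+b) * ((a - b) / (a + b) * p 1)
        field_simp
      · show t⁻¹ * (-((a-b) * p 2)) = t⁻¹ * (a+b) * ((a - b) / (a + b) * (-(p 2)))
        field_simp
  · rintro ⟨p', t, hp'ne, hp'C, ht, hf⟩
    refine ⟨![p' 0, p' 1, -(p' 2)], ?_, ?_, ?_⟩
    · intro h
      apply hp'ne
      have h0 : p' 0 = 0 := congrFun h 0
      have h1 : p' 1 = 0 := congrFun h 1
      have h2 : -(p' 2) = 0 := congrFun h 2
      exact pp_zero p' h0 h1 (neg_eq_zero.mp h2)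
    · show b * p' 1 ^ 2 + a * (-(p' 2)) ^ 2 = p' 0 ^ 2
      linear_combination hp'C
    · have hpC : b * (![p' 0, p' 1, -(p' 2)] : PP) 1 ^ 2 + a * (![p' 0, p' 1, -(p' 2)] : PP) 2 ^ 2
          = (![p' 0, p' 1, -(p' 2)] : PP) 0 ^ 2 := by
        show b * p' 1 ^ 2 + a * (-(p' 2)) ^ 2 = p' 0 ^ 2
        linear_combination hp'C
      have hpne : (![p' 0, p' 1, -(p' 2)] : PP) ≠ 0 := by
        intro h
        apply hp'ne
        have h0 : p' 0 = 0 := congrFun h 0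
        have h1 : p' 1 = 0 := congrFun h 1
        have h2 : -(p' 2) = 0 := congrFun h 2
        exact pp_zero p' h0 h1 (neg_eq_zero.mp h2)
      have hv : f = (t / (a+b)) • gvec a b (![p' 0, p' 1, -(p' 2)] : PP) := by
        rw [hf]
        funext i; fin_cases i
        · show t * p' 0 = t / (a+b) * ((a+b) * p' 0)
          field_simp
        · show t * ((a - b) / (a + b) * p' 1) = t / (a+b) * ((a-b) * p' 1)
          field_simp
        · show t * ((a - b) / (a + b) * p' 2) = t / (a+b) * (-((a-b) * (-(p' 2))))
          field_simp
      have hgne : gvec a b (![p' 0, p' 1, -(p' 2)] : PP) ≠ 0 :=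
        gvec_ne_zero a b ha hb hab hne _ hpC hpne
      refine ⟨?_, ?_, ?_⟩
      · rw [hv]
        exact smul_ne_zero (div_ne_zero ht hab) hgne
      · rw [hv]
        intro q r h1 h2 h3 h4 h5
        exact coll_smul q r _ _ (isFregier_gvec a b ha hb _ hpC hpne q r h1 h2 h3 h4 h5)
      · intro f'' hne'' hIsF''
        obtain ⟨τ, hτ, hτeq⟩ := fregier_unique a b ha hb hab hne _ hpC hpne f'' hne'' hIsF''
        refine ⟨τ * (a+b) / t, ?_, ?_⟩
        · exact div_ne_zero (mul_ne_zero hτ hab) ht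
        · rw [hτeq, hv, smul_smul]
          congr 1
          field_simp
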